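/- Let T be a t-norm that is general pseudo-homogeneous for F. Then T=min (i.e., T(x,y)=min{x,y} for all x,y) if and only if F(x,y)=xy for all x,y∈[0,1]. -/
import Mathlib


open Set Filter Topology

def IsTnorm (T : ℝ → ℝ → ℝ) : Prop :=
  (∀ x ∈ Set.Icc (0:ℝ) 1, ∀ y ∈ Set.Icc (0:ℝ) 1, T x y ∈ Set.Icc (0:ℝ) 1) ∧
  (∀ x ∈ Set.Icc (0:ℝ) 1, ∀ y ∈ Set.Icc (0:ℝ) 1, T x y = T y x) ∧
  (∀ x ∈ Set.Icc (0:ℝ) 1, ∀ y ∈ Set.Icc (0:ℝ) 1, ∀ z ∈ Set.Icc (0:ℝ) 1,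
      T x (T y z) = T (T x y) z) ∧
  (∀ x ∈ Set.Icc (0:ℝ) 1, ∀ y ∈ Set.Icc (0:ℝ) 1, ∀ z ∈ Set.Icc (0:ℝ) 1,
      y ≤ z → T x y ≤ T x z) ∧
  (∀ x ∈ Set.Icc (0:ℝ) 1, T x 1 = x)

def IsGPH (T F : ℝ → ℝ → ℝ) : Prop :=
  ∀ lam ∈ Set.Icc (0:ℝ) 1, ∀ x ∈ Set.Icc (0:ℝ) 1, ∀ y ∈ Set.Icc (0:ℝ) 1,
    T (lam * x) (lam * y) = F lam (T x y)

noncomputable def TD : ℝ → ℝ → ℝ := fun x y => if max x y = 1 then min x y else 0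

theorem min_iff_F_prod (T F : ℝ → ℝ → ℝ) (hT : IsTnorm T) (h : IsGPH T F) :
    (∀ x ∈ Set.Icc (0:ℝ) 1, ∀ y ∈ Set.Icc (0:ℝ) 1, T x y = min x y) ↔
    (∀ x ∈ Set.Icc (0:ℝ) 1, ∀ y ∈ Set.Icc (0:ℝ) 1, F x y = x * y) := by
  obtain ⟨hrng, hcomm, hassoc, hmono, hbd⟩ := hT
  have h1 : (1:ℝ) ∈ Set.Icc (0:ℝ) 1 := ⟨zero_le_one, le_refl 1⟩
  constructor
  · intro hmin x hx y hy
    have hxy : x * y ∈ Set.Icc (0:ℝ) 1 :=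
      ⟨mul_nonneg hx.1 hy.1, mul_le_one₀ hx.2 hy.1 hy.2⟩
    have := h x hx y hy 1 h1
    rw [hbd y hy, mul_one] at this
    rw [← this, hmin (x * y) hxy x hx]
    exact min_eq_left (by nlinarith [hx.1, hy.2])
  · intro hF x hx y hy
    -- T a a = a for a ∈ Icc
    have hdiag : ∀ a ∈ Set.Icc (0:ℝ) 1, T a a = a := by
      intro a ha
      have := h a ha 1 h1 1 h1
      rw [hF a ha (T 1 1) (hrng 1 h1 1 h1), hbd 1 h1, mul_one] at this
      simpa using this
    have hle1 : T x y ≤ x := by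
      have := hmono x hx y hy 1 h1 hy.2
      rwa [hbd x hx] at this
    have hle2 : T x y ≤ y := by
      rw [hcomm x hx y hy]
      have := hmono y hy x hx 1 h1 hx.2
      rwa [hbd y hy] at this
    set m := min x y with hm
    have hmIcc : m ∈ Set.Icc (0:ℝ) 1 := ⟨le_min hx.1 hy.1, min_le_of_left_le hx.2⟩
    have hge : m ≤ T x y := by
      have h3 : T m m ≤ T m y := hmono m hmIcc m hmIcc y hy (min_le_right x y)
      have h4 : T m y ≤ T x y := by
        rw [hcomm m hmIcc y hy, hcomm x hx y hy]
        exact hmono y hy m hmIcc x hx (min_le_left x y)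
      calc m = T m m := (hdiag m hmIcc).symm
        _ ≤ T m y := h3
        _ ≤ T x y := h4
    exact le_antisymm (le_min hle1 hle2) hge
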